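/- Let M be a compact smooth manifold without boundary, f : M → M a C¹ diffeomorphism, Λ ⊆ M a compact f-invariant set carrying a dominated splitting T_ΛM = E ⊕ F, and let p ∈ Λ be a hyperbolic periodic point of f of period τ whose index is at least dim E. Then: (i) for every x ∈ orb(p), E(x) is contained in the stable subspace E^s(x) of the hyperbolic splitting of orb(p); and (ii) there exist an integer m₀ ∈ ℕ and a constant λ₀ ∈ (0,1) such that for every m ≥ m₀, ∏_{0 ≤ i < τ} ‖Df^m|E(f^i(p))‖ < λ₀^{m·τ}. -/

import Mathlib

open Manifold Filter Topology Function
open scoped TensorProduct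

noncomputable section

/-- The model space `ℝ^d`. -/
abbrev Euc (d : ℕ) := EuclideanSpace ℝ (Fin d)

variable (d : ℕ) {M : Type*} [MetricSpace M] [CompactSpace M]
  [ChartedSpace (Euc d) M] [IsManifold (𝓡 d) ((⊤ : ℕ∞) : WithTop ℕ∞) M]

/-- The derivative of `f` at `x`, viewed as a linear endomorphism of the model space `ℝ^d`
(the tangent spaces are identified with `ℝ^d`). -/
def Dop (f : M → M) (x : M) : Euc d →L[ℝ] Euc d := mfderiv (𝓡 d) (𝓡 d) f x

/-- The operator norm `‖A|V‖` of the restriction of `A` to the subspace `V`. -/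
def normOn (A : Euc d →L[ℝ] Euc d) (V : Submodule ℝ (Euc d)) : ℝ := ‖A.comp V.subtypeL‖

/-- A `C¹` diffeomorphism of `M`. -/
structure C1Diffeo (d : ℕ) (M : Type*) [MetricSpace M]
    [ChartedSpace (Euc d) M] where
  toFun : M → M
  invFun : M → M
  left_inv : Function.LeftInverse invFun toFun
  right_inv : Function.RightInverse invFun toFun
  contMDiff_toFun : ContMDiff (𝓡 d) (𝓡 d) 1 toFun
  contMDiff_invFun : ContMDiff (𝓡 d) (𝓡 d) 1 invFun

instance : CoeFun (C1Diffeo d M) (fun _ => M → M) := ⟨C1Diffeo.toFun⟩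

/-- The `C¹` distance on `Diff¹(M)`. -/
def c1Dist (f g : C1Diffeo d M) : ℝ :=
  (⨆ x : M, dist (f.toFun x) (g.toFun x)) + (⨆ x : M, ‖Dop d f.toFun x - Dop d g.toFun x‖)
  + (⨆ x : M, dist (f.invFun x) (g.invFun x)) + (⨆ x : M, ‖Dop d f.invFun x - Dop d g.invFun x‖)

def c1Ball (f : C1Diffeo d M) (ε : ℝ) : Set (C1Diffeo d M) := {g | c1Dist d f g < ε}

/-- `U` is a neighborhood of `f` in the `C¹` topology. -/
def C1Nhd (f : C1Diffeo d M) (U : Set (C1Diffeo d M)) : Prop :=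
  f ∈ U ∧ ∃ ε > 0, c1Ball d f ε ⊆ U

def C1Open (U : Set (C1Diffeo d M)) : Prop := ∀ f ∈ U, ∃ ε > 0, c1Ball d f ε ⊆ U

def C1Dense (U : Set (C1Diffeo d M)) : Prop :=
  ∀ f : C1Diffeo d M, ∀ ε > 0, (c1Ball d f ε ∩ U).Nonempty

/-- A residual subset of `Diff¹(M)`: one containing a countable intersection of dense
open subsets. -/
def C1Residual (R : Set (C1Diffeo d M)) : Prop :=
  ∃ s : ℕ → Set (C1Diffeo d M), (∀ n, C1Open d (s n) ∧ C1Dense d (s n)) ∧ (⋂ n, s n) ⊆ R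

/-- The (forward) orbit of a point. For a periodic point this is the full orbit. -/
def orbitOf (f : M → M) (p : M) : Set M := {y | ∃ n : ℕ, f^[n] p = y}

/-- The stable space `E^s(a) = {v : ‖Df^n_a v‖ → 0}`. -/
def stableSubmodule (f : M → M) (a : M) : Submodule ℝ (Euc d) where
  carrier := {v | Tendsto (fun n : ℕ => ‖Dop d (f^[n]) a v‖) atTop (𝓝 0)}
  zero_mem' := by
    simp
  add_mem' := by
    intro v w hv hw
    have h := hv.add hw
    rw [add_zero] at h
    refine squeeze_zero (fun n => norm_nonneg _) (fun n => ?_) h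
    simpa [map_add] using norm_add_le (Dop d (f^[n]) a v) (Dop d (f^[n]) a w)
  smul_mem' := by
    intro c v hv
    have h : Tendsto (fun n : ℕ => ‖c‖ * ‖Dop d (f^[n]) a v‖) atTop (𝓝 0) := by
      have := (hv : Tendsto (fun n : ℕ => ‖Dop d (f^[n]) a v‖) atTop (𝓝 0)).const_mul ‖c‖
      simpa using this
    show Tendsto _ atTop (𝓝 0)
    refine h.congr fun n => ?_
    rw [map_smul, norm_smul]

/-- A hyperbolic splitting over an invariant set `Λ`, for the diffeomorphism `f`. -/
structure HypSplitting (f : C1Diffeo d M) (Λ : Set M) where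
  Es : M → Submodule ℝ (Euc d)
  Eu : M → Submodule ℝ (Euc d)
  C : ℝ
  lam : ℝ
  C_pos : 0 < C
  lam_mem : lam ∈ Set.Ioo (0:ℝ) 1
  inf_eq_bot : ∀ x ∈ Λ, Es x ⊓ Eu x = ⊥
  sup_eq_top : ∀ x ∈ Λ, Es x ⊔ Eu x = ⊤
  invariant_Es : ∀ x ∈ Λ, (Es x).map (Dop d f.toFun x).toLinearMap = Es (f.toFun x)
  invariant_Eu : ∀ x ∈ Λ, (Eu x).map (Dop d f.toFun x).toLinearMap = Eu (f.toFun x)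
  contracting : ∀ x ∈ Λ, ∀ n : ℕ, normOn d (Dop d (f.toFun^[n]) x) (Es x) ≤ C * lam ^ n
  expanding : ∀ x ∈ Λ, ∀ n : ℕ, normOn d (Dop d (f.invFun^[n]) x) (Eu x) ≤ C * lam ^ n

/-- A compact invariant set is hyperbolic if it carries a hyperbolic splitting. -/
def IsHyperbolicSet (f : C1Diffeo d M) (Λ : Set M) : Prop := Nonempty (HypSplitting d f Λ)

/-- `p` is a hyperbolic periodic point of `f`. -/
def IsHypPeriodicPt (f : C1Diffeo d M) (p : M) : Prop :=
  (∃ τ : ℕ, 0 < τ ∧ f.toFun^[τ] p = p) ∧ IsHyperbolicSet d f (orbitOf f.toFun p)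

/-- The index of a hyperbolic periodic point: the dimension of its stable space. -/
def ind (f : C1Diffeo d M) (p : M) : ℕ := Module.finrank ℝ (stableSubmodule d f.toFun p)

/-- The stable set of the orbit of `p` for the diffeomorphism `f`. -/
def Wstable (f : C1Diffeo d M) (p : M) : Set M :=
  {z | ∃ p' ∈ orbitOf f.toFun p,
    Tendsto (fun n : ℕ => dist (f.toFun^[n] z) (f.toFun^[n] p')) atTop (𝓝 0)}

/-- The unstable set of the orbit of `p` for the diffeomorphism `f`. -/
def Wunstable (f : C1Diffeo d M) (p : M) : Set M :=
  {z | ∃ p' ∈ orbitOf f.toFun p,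
    Tendsto (fun n : ℕ => dist (f.invFun^[n] z) (f.invFun^[n] p')) atTop (𝓝 0)}

/-- There is a transverse intersection point of `W^u(orb p)` and `W^s(orb q)`. -/
def TransverseInt (f : C1Diffeo d M) (p q : M) : Prop :=
  ∃ a, a ∈ Wunstable d f p ∧ a ∈ Wstable d f q ∧
    stableSubmodule d f.invFun a ⊔ stableSubmodule d f.toFun a = ⊤

/-- Two hyperbolic periodic points are homoclinically related. -/
def HomRelated (f : C1Diffeo d M) (p q : M) : Prop :=
  TransverseInt d f p q ∧ TransverseInt d f q p

/-- The homoclinic class of `p`: the closure of the set of hyperbolic periodic points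
homoclinically related to `p`. -/
def homoclinicClass (f : C1Diffeo d M) (p : M) : Set M :=
  closure {q | IsHypPeriodicPt d f q ∧ HomRelated d f p q}

/-- An `(m, λ)`-dominated splitting `E ⊕ F` over the invariant set `Λ`. -/
structure IsDomSplitting (f : C1Diffeo d M) (Λ : Set M)
    (E F : M → Submodule ℝ (Euc d)) (m : ℕ) (lam : ℝ) : Prop where
  m_pos : 0 < m
  lam_mem : lam ∈ Set.Ioo (0:ℝ) 1
  inf_eq_bot : ∀ x ∈ Λ, E x ⊓ F x = ⊥
  sup_eq_top : ∀ x ∈ Λ, E x ⊔ F x = ⊤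
  invariant_E : ∀ x ∈ Λ, (E x).map (Dop d f.toFun x).toLinearMap = E (f.toFun x)
  invariant_F : ∀ x ∈ Λ, (F x).map (Dop d f.toFun x).toLinearMap = F (f.toFun x)
  const_dim : ∀ x ∈ Λ, ∀ y ∈ Λ, Module.finrank ℝ (E x) = Module.finrank ℝ (E y)
  dominated : ∀ x ∈ Λ,
    normOn d (Dop d (f.toFun^[m]) x) (E x)
      * normOn d (Dop d (f.invFun^[m]) (f.toFun^[m] x)) (F (f.toFun^[m] x)) < lam

/-- The bundle `E` is (uniformly) contracted over `Λ`. -/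
def IsContracted (f : C1Diffeo d M) (Λ : Set M) (E : M → Submodule ℝ (Euc d)) : Prop :=
  ∃ C > 0, ∃ lam ∈ Set.Ioo (0:ℝ) 1, ∀ x ∈ Λ, ∀ n : ℕ,
    normOn d (Dop d (f.toFun^[n]) x) (E x) ≤ C * lam ^ n

/-- `x` is a `λ`-`E`-Pliss point for the map `g`. -/
def IsPlissPt (g : M → M) (E : M → Submodule ℝ (Euc d)) (lam : ℝ) (x : M) : Prop :=
  ∀ n : ℕ, 1 ≤ n →
    ∏ i ∈ Finset.range n, normOn d (Dop d g (g^[i] x)) (E (g^[i] x)) ≤ lam ^ n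

/-- A set `K` is a `λ`-`E`-weak set: it contains no `λ`-`E`-Pliss point. -/
def IsWeakSet (g : M → M) (E : M → Submodule ℝ (Euc d)) (lam : ℝ) (K : Set M) : Prop :=
  ∀ x ∈ K, ¬ IsPlissPt d g E lam x

/-- `x` is a `λ`-bi-Pliss point: a `λ`-`E`-Pliss point for `f` and a `λ`-`F`-Pliss point
for `f⁻¹`. -/
def IsBiPlissPt (f : C1Diffeo d M) (E F : M → Submodule ℝ (Euc d)) (lam : ℝ) (x : M) : Prop :=
  IsPlissPt d f.toFun E lam x ∧ IsPlissPt d f.invFun F lam x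

/-- The ω-limit set of `y` under the map `g`: the set of accumulation points of the
forward orbit of `y`. -/
def omegaLim (g : M → M) (y : M) : Set M :=
  {z | ∃ φ : ℕ → ℕ, StrictMono φ ∧ Tendsto (fun n => g^[φ n] y) atTop (𝓝 z)}

/-- The α-limit set of `y` under the diffeomorphism `f`: the set of accumulation points of
the backward orbit of `y`. -/
def alphaLim (f : C1Diffeo d M) (y : M) : Set M := omegaLim f.invFun y

/-- `b` is chain attainable from `a` for the map `g`: for every `ε > 0` there is an
`ε`-pseudo-orbit from `a` to `b`. -/
def ChainAttain (g : M → M) (a b : M) : Prop :=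
  ∀ ε > 0, ∃ (n : ℕ) (x : ℕ → M), 1 ≤ n ∧ x 0 = a ∧ x n = b ∧
    ∀ i < n, dist (g (x i)) (x (i + 1)) < ε

/-- The chain recurrence class of `p` for the map `g`. -/
def chainClass (g : M → M) (p : M) : Set M :=
  {z | ChainAttain g z p ∧ ChainAttain g p z}

/-- The set of Lyapunov exponents of a periodic orbit of period `τ`:
the numbers `(1/τ) log |μ|` over the complex eigenvalues `μ` of the complexification of
`D(f^τ)_p`. -/
def lyapunovExps (f : M → M) (p : M) (τ : ℕ) : Set ℝ :=
  {χ | ∃ μ : ℂ,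
    Module.End.HasEigenvalue (LinearMap.baseChange ℂ (Dop d (f^[τ]) p).toLinearMap) μ ∧
    χ = Real.log (‖μ‖) / τ}

/-- The spectral radius of the restriction of `A` to an `A`-invariant subspace `V`:
the supremum of the moduli of the complex eigenvalues of the complexification of the
restriction `A|V`. -/
def spectralRadiusOn (A : Euc d →L[ℝ] Euc d) (V : Submodule ℝ (Euc d))
    (h : ∀ v ∈ V, A v ∈ V) : ℝ :=
  sSup {r | ∃ μ : ℂ,
    Module.End.HasEigenvalue (LinearMap.baseChange ℂ (A.toLinearMap.restrict h)) μ ∧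
    r = ‖μ‖}

end


set_option linter.unusedSectionVars false
section Aux

open scoped Manifold
open Function Filter Topology

variable {d : ℕ} {M : Type*} [MetricSpace M] [CompactSpace M]
  [ChartedSpace (Euc d) M] [IsManifold (𝓡 d) ((⊤ : ℕ∞) : WithTop ℕ∞) M]

lemma normOn_nonneg (A : Euc d →L[ℝ] Euc d) (V : Submodule ℝ (Euc d)) :
    0 ≤ normOn d A V := norm_nonneg (A.comp V.subtypeL)

lemma norm_apply_le_normOn (A : Euc d →L[ℝ] Euc d) {V : Submodule ℝ (Euc d)} {v : Euc d}
    (hv : v ∈ V) : ‖A v‖ ≤ normOn d A V * ‖v‖ := by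
  simpa [normOn] using (A.comp V.subtypeL).le_opNorm ⟨v, hv⟩

lemma normOn_mono (A : Euc d →L[ℝ] Euc d) {V W : Submodule ℝ (Euc d)} (h : V ≤ W) :
    normOn d A V ≤ normOn d A W := by
  unfold normOn
  refine ContinuousLinearMap.opNorm_le_bound _ (normOn_nonneg A W) ?_
  rintro ⟨v, hv⟩
  simpa [normOn] using norm_apply_le_normOn A (h hv)

lemma normOn_comp_le (A B : Euc d →L[ℝ] Euc d) {V W : Submodule ℝ (Euc d)}
    (h : ∀ v ∈ V, A v ∈ W) :
    normOn d (B.comp A) V ≤ normOn d B W * normOn d A V := by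
  unfold normOn
  refine ContinuousLinearMap.opNorm_le_bound _
    (mul_nonneg (normOn_nonneg B W) (normOn_nonneg A V)) ?_
  rintro ⟨v, hv⟩
  have h1 : ‖B (A v)‖ ≤ normOn d B W * ‖A v‖ := norm_apply_le_normOn B (h v hv)
  have h2 : ‖A v‖ ≤ normOn d A V * ‖v‖ := norm_apply_le_normOn A hv
  have h3 : ‖B (A v)‖ ≤ normOn d B W * (normOn d A V * ‖v‖) :=
    h1.trans (mul_le_mul_of_nonneg_left h2 (normOn_nonneg B W))
  show ‖B (A v)‖ ≤ _
  calc ‖B (A v)‖ ≤ normOn d B W * (normOn d A V * ‖v‖) := h3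
    _ = normOn d B W * normOn d A V * ‖(⟨v, hv⟩ : V)‖ := by
        rw [mul_assoc]; rfl

lemma normOn_id_le_one (V : Submodule ℝ (Euc d)) :
    normOn d (ContinuousLinearMap.id ℝ (Euc d)) V ≤ 1 := by
  unfold normOn
  refine ContinuousLinearMap.opNorm_le_bound _ zero_le_one ?_
  rintro ⟨v, hv⟩
  simp

lemma contMDiff_iter {g : M → M} (hg : ContMDiff (𝓡 d) (𝓡 d) 1 g) (n : ℕ) :
    ContMDiff (𝓡 d) (𝓡 d) 1 (g^[n]) := by
  induction n with
  | zero => simpa using contMDiff_id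
  | succ n ih => rw [Function.iterate_succ']; exact hg.comp ih

lemma dop_zero (g : M → M) (x : M) :
    Dop d (g^[0]) x = ContinuousLinearMap.id ℝ (Euc d) := by
  simp only [Function.iterate_zero, Dop]
  exact mfderiv_id

lemma dop_iterate_add {g : M → M} (hg : ContMDiff (𝓡 d) (𝓡 d) 1 g) (x : M) (a b : ℕ) :
    Dop d (g^[a + b]) x = (Dop d (g^[b]) (g^[a] x)).comp (Dop d (g^[a]) x) := by
  have h1 : (g^[a + b]) = (g^[b]) ∘ (g^[a]) := by
    rw [add_comm, Function.iterate_add]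
  rw [Dop, h1]
  exact mfderiv_comp x ((contMDiff_iter hg b).mdifferentiableAt one_ne_zero)
    ((contMDiff_iter hg a).mdifferentiableAt one_ne_zero)

lemma dop_inv_comp (f : C1Diffeo d M) (x : M) (n : ℕ) :
    (Dop d (f.invFun^[n]) (f.toFun^[n] x)).comp (Dop d (f.toFun^[n]) x)
      = ContinuousLinearMap.id ℝ (Euc d) := by
  have hli : Function.LeftInverse (f.invFun^[n]) (f.toFun^[n]) := f.left_inv.iterate n
  have hcomp : (f.invFun^[n]) ∘ (f.toFun^[n]) = id := hli.comp_eq_id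
  have h := mfderiv_comp (I := 𝓡 d) (I' := 𝓡 d) (I'' := 𝓡 d) (f := f.toFun^[n])
    (g := f.invFun^[n]) x
    ((contMDiff_iter f.contMDiff_invFun n).mdifferentiableAt one_ne_zero)
    ((contMDiff_iter f.contMDiff_toFun n).mdifferentiableAt one_ne_zero)
  rw [hcomp] at h
  rw [Dop, Dop]; refine h.symm.trans ?_
  exact mfderiv_id

end Aux

section Aux2

open scoped Manifold
open Function Filter Topology

variable {d : ℕ} {M : Type*} [MetricSpace M] [CompactSpace M]
  [ChartedSpace (Euc d) M] [IsManifold (𝓡 d) ((⊤ : ℕ∞) : WithTop ℕ∞) M]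

lemma map_clm_comp (A B : Euc d →L[ℝ] Euc d) (V : Submodule ℝ (Euc d)) :
    V.map (B.comp A).toLinearMap = (V.map A.toLinearMap).map B.toLinearMap := by
  ext v
  simp only [Submodule.mem_map, ContinuousLinearMap.coe_coe, ContinuousLinearMap.comp_apply]
  constructor
  · rintro ⟨u, hu, rfl⟩; exact ⟨A u, ⟨u, hu, rfl⟩, rfl⟩
  · rintro ⟨w, ⟨u, hu, rfl⟩, rfl⟩; exact ⟨u, hu, rfl⟩

lemma iter_mem {f : M → M} {S : Set M} (hS : ∀ x ∈ S, f x ∈ S) {x : M} (hx : x ∈ S) (n : ℕ) :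
    f^[n] x ∈ S := by
  induction n with
  | zero => simpa using hx
  | succ n ih => rw [Function.iterate_succ_apply']; exact hS _ ih

lemma map_iter {f : C1Diffeo d M} {S : Set M} {E : M → Submodule ℝ (Euc d)}
    (hS : ∀ x ∈ S, f.toFun x ∈ S)
    (hE : ∀ x ∈ S, (E x).map (Dop d f.toFun x).toLinearMap = E (f.toFun x))
    {x : M} (hx : x ∈ S) (n : ℕ) :
    (E x).map (Dop d (f.toFun^[n]) x).toLinearMap = E (f.toFun^[n] x) := by
  induction n with
  | zero =>
      rw [dop_zero]
      ext v
      simp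
  | succ n ih =>
      have hcomp := dop_iterate_add f.contMDiff_toFun x n 1
      rw [hcomp, map_clm_comp, ih]
      have h1 : (f.toFun^[1]) = f.toFun := Function.iterate_one f.toFun
      rw [h1]
      rw [hE (f.toFun^[n] x) (iter_mem hS hx n)]
      rw [← Function.iterate_succ_apply' f.toFun n x]

lemma mem_map_iter {f : C1Diffeo d M} {S : Set M} {E : M → Submodule ℝ (Euc d)}
    (hS : ∀ x ∈ S, f.toFun x ∈ S)
    (hE : ∀ x ∈ S, (E x).map (Dop d f.toFun x).toLinearMap = E (f.toFun x))
    {x : M} (hx : x ∈ S) (n : ℕ) {v : Euc d} (hv : v ∈ E x) :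
    Dop d (f.toFun^[n]) x v ∈ E (f.toFun^[n] x) := by
  rw [← map_iter hS hE hx n]
  exact Submodule.mem_map_of_mem hv

lemma dom_telescope {f : C1Diffeo d M} {Λ : Set M} {E F : M → Submodule ℝ (Euc d)}
    {m : ℕ} {lam : ℝ} (D : IsDomSplitting d f Λ E F m lam)
    (hS : ∀ x ∈ Λ, f.toFun x ∈ Λ) {x : M} (hx : x ∈ Λ) (k : ℕ) :
    normOn d (Dop d (f.toFun^[k * m]) x) (E x)
      * normOn d (Dop d (f.invFun^[k * m]) (f.toFun^[k * m] x)) (F (f.toFun^[k * m] x))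
      ≤ lam ^ k := by
  induction k with
  | zero =>
      simp only [Nat.zero_mul, pow_zero, dop_zero]
      exact mul_le_one₀ (normOn_id_le_one _) (normOn_nonneg _ _) (normOn_id_le_one _)
  | succ k ih =>
      have hyΛ : f.toFun^[k * m] x ∈ Λ := iter_mem hS hx _
      have hzy : f.toFun^[(k + 1) * m] x = f.toFun^[m] (f.toFun^[k * m] x) := by
        rw [Nat.succ_mul, add_comm, Function.iterate_add_apply]
      -- forward estimate
      have hfwd : normOn d (Dop d (f.toFun^[(k + 1) * m]) x) (E x)
          ≤ normOn d (Dop d (f.toFun^[m]) (f.toFun^[k * m] x)) (E (f.toFun^[k * m] x))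
            * normOn d (Dop d (f.toFun^[k * m]) x) (E x) := by
        have hEq : Dop d (f.toFun^[(k + 1) * m]) x
            = (Dop d (f.toFun^[m]) (f.toFun^[k * m] x)).comp (Dop d (f.toFun^[k * m]) x) := by
          rw [Nat.succ_mul]
          exact dop_iterate_add f.contMDiff_toFun x (k * m) m
        rw [hEq]
        exact normOn_comp_le _ _ (fun v hv => mem_map_iter hS D.invariant_E hx (k * m) hv)
      -- backward estimate
      have hinvy : f.invFun^[m] (f.toFun^[(k + 1) * m] x) = f.toFun^[k * m] x := by
        rw [hzy]; exact (f.left_inv.iterate m) _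
      have hbwd : normOn d (Dop d (f.invFun^[(k + 1) * m]) (f.toFun^[(k + 1) * m] x))
            (F (f.toFun^[(k + 1) * m] x))
          ≤ normOn d (Dop d (f.invFun^[k * m]) (f.toFun^[k * m] x)) (F (f.toFun^[k * m] x))
            * normOn d (Dop d (f.invFun^[m]) (f.toFun^[(k + 1) * m] x))
                (F (f.toFun^[(k + 1) * m] x)) := by
        have hEq : Dop d (f.invFun^[(k + 1) * m]) (f.toFun^[(k + 1) * m] x)
            = (Dop d (f.invFun^[k * m]) (f.toFun^[k * m] x)).comp
                (Dop d (f.invFun^[m]) (f.toFun^[(k + 1) * m] x)) := by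
          have h := dop_iterate_add f.contMDiff_invFun (f.toFun^[(k + 1) * m] x) m (k * m)
          rw [hinvy] at h
          rw [← h]
          congr 1
          rw [Nat.succ_mul, add_comm]
        rw [hEq]
        refine normOn_comp_le _ _ (fun w hw => ?_)
        have hmapF : (F (f.toFun^[k * m] x)).map (Dop d (f.toFun^[m]) (f.toFun^[k * m] x)).toLinearMap
            = F (f.toFun^[(k + 1) * m] x) := by
          rw [hzy]; exact map_iter hS D.invariant_F hyΛ m
        rw [← hmapF] at hw
        rcases hw with ⟨u, hu, rfl⟩
        have hid : Dop d (f.invFun^[m]) (f.toFun^[(k + 1) * m] x)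
            (Dop d (f.toFun^[m]) (f.toFun^[k * m] x) u) = u := by
          rw [hzy, ← ContinuousLinearMap.comp_apply, dop_inv_comp f (f.toFun^[k * m] x) m,
            ContinuousLinearMap.id_apply]
        rw [ContinuousLinearMap.coe_coe, hid]; exact hu
      -- domination at y
      have hdom : normOn d (Dop d (f.toFun^[m]) (f.toFun^[k * m] x)) (E (f.toFun^[k * m] x))
          * normOn d (Dop d (f.invFun^[m]) (f.toFun^[(k + 1) * m] x))
              (F (f.toFun^[(k + 1) * m] x)) < lam := by
        have := D.dominated (f.toFun^[k * m] x) hyΛ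
        rw [← hzy] at this
        exact this
      calc normOn d (Dop d (f.toFun^[(k+1) * m]) x) (E x)
            * normOn d (Dop d (f.invFun^[(k+1) * m]) (f.toFun^[(k + 1) * m] x))
                (F (f.toFun^[(k + 1) * m] x))
          ≤ (normOn d (Dop d (f.toFun^[m]) (f.toFun^[k * m] x)) (E (f.toFun^[k * m] x))
              * normOn d (Dop d (f.toFun^[k * m]) x) (E x))
            * (normOn d (Dop d (f.invFun^[k * m]) (f.toFun^[k * m] x)) (F (f.toFun^[k * m] x))
              * normOn d (Dop d (f.invFun^[m]) (f.toFun^[(k + 1) * m] x))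
                  (F (f.toFun^[(k + 1) * m] x))) := by
            exact mul_le_mul hfwd hbwd (normOn_nonneg _ _)
              (mul_nonneg (normOn_nonneg _ _) (normOn_nonneg _ _))
        _ = (normOn d (Dop d (f.toFun^[m]) (f.toFun^[k * m] x)) (E (f.toFun^[k * m] x))
              * normOn d (Dop d (f.invFun^[m]) (f.toFun^[(k + 1) * m] x))
                  (F (f.toFun^[(k + 1) * m] x)))
            * (normOn d (Dop d (f.toFun^[k * m]) x) (E x)
              * normOn d (Dop d (f.invFun^[k * m]) (f.toFun^[k * m] x))
                  (F (f.toFun^[k * m] x))) := by ring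
        _ ≤ lam * lam ^ k := by
            refine mul_le_mul hdom.le ih ?_ ?_
            · exact mul_nonneg (normOn_nonneg _ _) (normOn_nonneg _ _)
            · exact le_of_lt D.lam_mem.1
        _ = lam ^ (k + 1) := by rw [pow_succ]; ring

end Aux2

section Aux3

open scoped Manifold
open Function Filter Topology

variable {d : ℕ} {M : Type*} [MetricSpace M] [CompactSpace M]
  [ChartedSpace (Euc d) M] [IsManifold (𝓡 d) ((⊤ : ℕ∞) : WithTop ℕ∞) M]

lemma eventually_mul_pow_lt {c ρ ε : ℝ} (h0 : 0 ≤ ρ) (h1 : ρ < 1) (hε : 0 < ε) :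
    ∀ᶠ k : ℕ in atTop, c * ρ ^ k < ε := by
  have h := (tendsto_pow_atTop_nhds_zero_of_lt_one h0 h1).const_mul c
  rw [mul_zero] at h
  exact h.eventually_lt_const hε

set_option maxHeartbeats 2000000 in
lemma E_le_Es {f : C1Diffeo d M} {Λ : Set M} {E F : M → Submodule ℝ (Euc d)}
    {N : ℕ} {lam : ℝ} (D : IsDomSplitting d f Λ E F N lam)
    (hSΛ : ∀ x ∈ Λ, f.toFun x ∈ Λ) {p : M} (hpΛ : p ∈ Λ)
    (H : HypSplitting d f (orbitOf f.toFun p))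
    (hind : Module.finrank ℝ (E p) ≤ Module.finrank ℝ (H.Es p)) :
    E p ≤ H.Es p := by
  have hporb : p ∈ orbitOf f.toFun p := ⟨0, rfl⟩
  have hSorb : ∀ x ∈ orbitOf f.toFun p, f.toFun x ∈ orbitOf f.toFun p := by
    rintro x ⟨n, rfl⟩
    exact ⟨n + 1, Function.iterate_succ_apply' f.toFun n p⟩
  have hC : (0:ℝ) < H.C := H.C_pos
  have hl0 : (0:ℝ) < H.lam := H.lam_mem.1
  have hl1 : H.lam < 1 := H.lam_mem.2
  have hlam0 : (0:ℝ) < lam := D.lam_mem.1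
  have hlam1 : lam < 1 := D.lam_mem.2
  set ρ : ℝ := H.lam ^ N with hρdef
  have hρ0 : 0 < ρ := pow_pos hl0 N
  have hρ1' : ρ < 1 := pow_lt_one₀ hl0.le hl1 D.m_pos.ne'
  have hρ1 : ρ ≤ 1 := hρ1'.le
  have hpow : ∀ k : ℕ, H.lam ^ (k * N) = ρ ^ k := fun k => by
    rw [hρdef, ← pow_mul, mul_comm]
  have hρk0 : ∀ k : ℕ, 0 < ρ ^ k := fun k => pow_pos hρ0 k
  have hρk1 : ∀ k : ℕ, ρ ^ k ≤ 1 := fun k => pow_le_one₀ hρ0.le hρ1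
  -- contraction on Es p
  have hcontr : ∀ k : ℕ, ∀ w ∈ H.Es p,
      ‖Dop d (f.toFun^[k * N]) p w‖ ≤ H.C * ρ ^ k * ‖w‖ := by
    intro k w hw
    have h1 := norm_apply_le_normOn (Dop d (f.toFun^[k * N]) p) hw
    have h2 := H.contracting p hporb (k * N)
    rw [hpow k] at h2
    exact h1.trans (mul_le_mul_of_nonneg_right h2 (norm_nonneg w))
  -- expansion on Eu p
  have hexp : ∀ k : ℕ, ∀ w ∈ H.Eu p,
      ‖w‖ ≤ H.C * ρ ^ k * ‖Dop d (f.toFun^[k * N]) p w‖ := by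
    intro k w hw
    have hm : Dop d (f.toFun^[k * N]) p w ∈ H.Eu (f.toFun^[k * N] p) :=
      mem_map_iter hSorb H.invariant_Eu hporb _ hw
    have hid : Dop d (f.invFun^[k * N]) (f.toFun^[k * N] p)
        (Dop d (f.toFun^[k * N]) p w) = w := by
      rw [← ContinuousLinearMap.comp_apply, dop_inv_comp, ContinuousLinearMap.id_apply]
    have h1 := norm_apply_le_normOn (Dop d (f.invFun^[k * N]) (f.toFun^[k * N] p)) hm
    rw [hid] at h1
    have h2 := H.expanding (f.toFun^[k * N] p) (iter_mem hSorb hporb _) (k * N)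
    rw [hpow k] at h2
    exact h1.trans (mul_le_mul_of_nonneg_right h2 (norm_nonneg _))
  -- growth of vectors of F p
  have hFgrow : ∀ k : ℕ, ∀ w ∈ F p,
      normOn d (Dop d (f.toFun^[k * N]) p) (E p) * ‖w‖
        ≤ lam ^ k * ‖Dop d (f.toFun^[k * N]) p w‖ := by
    intro k w hw
    have htel := dom_telescope D hSΛ hpΛ k
    have hw' : Dop d (f.toFun^[k * N]) p w ∈ F (f.toFun^[k * N] p) :=
      mem_map_iter hSΛ D.invariant_F hpΛ _ hw
    have hid : Dop d (f.invFun^[k * N]) (f.toFun^[k * N] p)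
        (Dop d (f.toFun^[k * N]) p w) = w := by
      rw [← ContinuousLinearMap.comp_apply, dop_inv_comp, ContinuousLinearMap.id_apply]
    have h1 := norm_apply_le_normOn (Dop d (f.invFun^[k * N]) (f.toFun^[k * N] p)) hw'
    rw [hid] at h1
    have ha0 := normOn_nonneg (Dop d (f.toFun^[k * N]) p) (E p)
    have hb0 := normOn_nonneg (Dop d (f.invFun^[k * N]) (f.toFun^[k * N] p))
      (F (f.toFun^[k * N] p))
    nlinarith [norm_nonneg (Dop d (f.toFun^[k * N]) p w)]
  intro v hvE
  by_contra hvns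
  have hvs_top : v ∈ H.Es p ⊔ H.Eu p := by
    rw [H.sup_eq_top p hporb]; trivial
  obtain ⟨vs, hvs, vu, hvu, hsum⟩ := Submodule.mem_sup.1 hvs_top
  have hvu0 : vu ≠ 0 := by
    rintro rfl
    exact hvns (by rw [← hsum, add_zero]; exact hvs)
  have hvupos : 0 < ‖vu‖ := norm_pos_iff.2 hvu0
  -- lower bound on a_k ‖v‖
  have la : ∀ k : ℕ, ‖vu‖ / (H.C * ρ ^ k)
      ≤ normOn d (Dop d (f.toFun^[k * N]) p) (E p) * ‖v‖ + H.C * ρ ^ k * ‖vs‖ := by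
    intro k
    have h1 := norm_apply_le_normOn (Dop d (f.toFun^[k * N]) p) hvE
    have h2 : Dop d (f.toFun^[k * N]) p v
        = Dop d (f.toFun^[k * N]) p vs + Dop d (f.toFun^[k * N]) p vu := by
      rw [← hsum, map_add]
    have h3 := hcontr k vs hvs
    have h4 := hexp k vu hvu
    have h5 : ‖Dop d (f.toFun^[k * N]) p vu‖
        ≤ ‖Dop d (f.toFun^[k * N]) p v‖ + ‖Dop d (f.toFun^[k * N]) p vs‖ := by
      rw [h2]
      simpa [add_sub_cancel_left] using
        norm_sub_le (Dop d (f.toFun^[k * N]) p vs + Dop d (f.toFun^[k * N]) p vu)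
          (Dop d (f.toFun^[k * N]) p vs)
    rw [div_le_iff₀ (by positivity)]
    have h6 : H.C * ρ ^ k * ‖Dop d (f.toFun^[k * N]) p vu‖
        ≤ H.C * ρ ^ k * (‖Dop d (f.toFun^[k * N]) p v‖
          + ‖Dop d (f.toFun^[k * N]) p vs‖) :=
      mul_le_mul_of_nonneg_left h5 (by positivity)
    have h7 := add_le_add h1 h3
    have h8 : H.C * ρ ^ k * (‖Dop d (f.toFun^[k * N]) p v‖
          + ‖Dop d (f.toFun^[k * N]) p vs‖)
        ≤ H.C * ρ ^ k * (normOn d (Dop d (f.toFun^[k * N]) p) (E p) * ‖v‖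
          + H.C * ρ ^ k * ‖vs‖) :=
      mul_le_mul_of_nonneg_left h7 (by positivity)
    nlinarith [h4, h6, h8]
  have hvuC : 0 < ‖vu‖ / (2 * H.C) := by positivity
  have hmono : ∀ k : ℕ, ‖vu‖ / H.C ≤ ‖vu‖ / (H.C * ρ ^ k) := by
    intro k
    apply div_le_div_of_nonneg_left (norm_nonneg vu) (by positivity)
    calc H.C * ρ ^ k ≤ H.C * 1 := by
          exact mul_le_mul_of_nonneg_left (hρk1 k) hC.le
      _ = H.C := mul_one _
  have hid2 : ‖vu‖ / H.C = 2 * (‖vu‖ / (2 * H.C)) := by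
    field_simp
  -- Es p ⊓ F p = ⊥
  have hEsF : H.Es p ⊓ F p = ⊥ := by
    rw [Submodule.eq_bot_iff]
    rintro w ⟨hw1, hw2⟩
    by_contra hw0
    have hwpos : 0 < ‖w‖ := norm_pos_iff.2 hw0
    have key : ∀ k : ℕ, normOn d (Dop d (f.toFun^[k * N]) p) (E p) ≤ H.C * ρ ^ k := by
      intro k
      have h1 := hFgrow k w hw2
      have h2 := hcontr k w hw1
      have h3 : lam ^ k ≤ 1 := pow_le_one₀ hlam0.le hlam1.le
      have h4 : (0:ℝ) < lam ^ k := pow_pos hlam0 k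
      have : normOn d (Dop d (f.toFun^[k * N]) p) (E p) * ‖w‖ ≤ H.C * ρ ^ k * ‖w‖ := by
        nlinarith [norm_nonneg (Dop d (f.toFun^[k * N]) p w),
          normOn_nonneg (Dop d (f.toFun^[k * N]) p) (E p), hρk0 k]
      exact le_of_mul_le_mul_right this hwpos
    have hev1 : ∀ᶠ k : ℕ in atTop, (H.C * ‖v‖ + H.C * ‖vs‖) * ρ ^ k < ‖vu‖ / H.C :=
      eventually_mul_pow_lt hρ0.le hρ1' (by positivity)
    obtain ⟨k, hk⟩ := hev1.exists
    have h1 := la k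
    have h2 := hmono k
    have h3 : normOn d (Dop d (f.toFun^[k * N]) p) (E p) * ‖v‖
        ≤ H.C * ρ ^ k * ‖v‖ := mul_le_mul_of_nonneg_right (key k) (norm_nonneg v)
    nlinarith
  -- Es p ⊔ F p = ⊤
  have hEsFtop : H.Es p ⊔ F p = ⊤ := by
    have h1 := Submodule.finrank_sup_add_finrank_inf_eq (H.Es p) (F p)
    rw [hEsF, finrank_bot, add_zero] at h1
    have h2 := Submodule.finrank_sup_add_finrank_inf_eq (E p) (F p)
    rw [D.sup_eq_top p hpΛ] at h2
    have htop : Module.finrank ℝ (⊤ : Submodule ℝ (Euc d)) = Module.finrank ℝ (Euc d) :=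
      finrank_top ℝ (Euc d)
    rw [htop] at h2
    have h3 : Module.finrank ℝ (Euc d)
        ≤ Module.finrank ℝ ↥(H.Es p ⊔ F p) := by
      rw [h1]; omega
    have h4 : Module.finrank ℝ ↥(H.Es p ⊔ F p) ≤ Module.finrank ℝ (Euc d) :=
      Submodule.finrank_le _
    exact Submodule.eq_top_of_finrank_eq (le_antisymm h4 h3)
  have hvEsF : v ∈ H.Es p ⊔ F p := by rw [hEsFtop]; trivial
  obtain ⟨ws, hws, wf, hwf, hsum2⟩ := Submodule.mem_sup.1 hvEsF
  have hwf0 : wf ≠ 0 := by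
    rintro rfl
    exact hvns (by rw [← hsum2, add_zero]; exact hws)
  have hwfpos : 0 < ‖wf‖ := norm_pos_iff.2 hwf0
  -- eventual facts
  have W1 : ∀ᶠ k : ℕ in atTop, (H.C * ‖vs‖) * ρ ^ k < ‖vu‖ / (2 * H.C) :=
    eventually_mul_pow_lt hρ0.le hρ1' hvuC
  have W2 : ∀ᶠ k : ℕ in atTop, ‖v‖ * lam ^ k < ‖wf‖ / 2 :=
    eventually_mul_pow_lt hlam0.le hlam1 (by positivity)
  have W3 : ∀ᶠ k : ℕ in atTop, (2 * H.C * ‖ws‖ * ‖v‖) * ρ ^ k < (‖vu‖ / (2 * H.C)) * ‖wf‖ :=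
    eventually_mul_pow_lt hρ0.le hρ1' (by positivity)
  obtain ⟨k, hk⟩ := ((W1.and W2).and W3).exists
  obtain ⟨⟨hk1, hk2⟩, hk3⟩ := hk
  set aK := normOn d (Dop d (f.toFun^[k * N]) p) (E p) with haK
  have haK0 : 0 ≤ aK := normOn_nonneg _ _
  -- lower bound
  have hlow : ‖vu‖ / (2 * H.C) ≤ aK * ‖v‖ := by
    have h1 := la k
    have h2 := hmono k
    rw [hid2] at h2
    nlinarith
  -- upper bound
  have hgrow := hFgrow k wf hwf
  have hDv := norm_apply_le_normOn (Dop d (f.toFun^[k * N]) p) hvE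
  have hDws := hcontr k ws hws
  have hsplitD : Dop d (f.toFun^[k * N]) p v
      = Dop d (f.toFun^[k * N]) p ws + Dop d (f.toFun^[k * N]) p wf := by
    rw [← hsum2, map_add]
  have hDwf : ‖Dop d (f.toFun^[k * N]) p wf‖
      ≤ ‖Dop d (f.toFun^[k * N]) p v‖ + ‖Dop d (f.toFun^[k * N]) p ws‖ := by
    rw [hsplitD]
    simpa [add_sub_cancel_left] using
      norm_sub_le (Dop d (f.toFun^[k * N]) p ws + Dop d (f.toFun^[k * N]) p wf)
        (Dop d (f.toFun^[k * N]) p ws)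
  have hlamk0 : (0:ℝ) < lam ^ k := pow_pos hlam0 k
  have hlamk1 : lam ^ k ≤ 1 := pow_le_one₀ hlam0.le hlam1.le
  -- aK * ‖wf‖ ≤ lam^k * aK * ‖v‖ + C ρ^k ‖ws‖
  have hchain : aK * ‖wf‖ ≤ lam ^ k * (aK * ‖v‖) + H.C * ρ ^ k * ‖ws‖ := by
    have s1 : lam ^ k * ‖Dop d (f.toFun^[k * N]) p wf‖
        ≤ lam ^ k * (aK * ‖v‖ + H.C * ρ ^ k * ‖ws‖) :=
      mul_le_mul_of_nonneg_left (hDwf.trans (add_le_add hDv hDws)) hlamk0.le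
    have s2 : lam ^ k * (aK * ‖v‖ + H.C * ρ ^ k * ‖ws‖)
        ≤ lam ^ k * (aK * ‖v‖) + H.C * ρ ^ k * ‖ws‖ := by
      nlinarith [mul_nonneg (sub_nonneg.2 hlamk1)
        (mul_nonneg (mul_nonneg hC.le (hρk0 k).le) (norm_nonneg ws))]
    linarith [hgrow, s1, s2]
  -- lam^k * (aK ‖v‖) ≤ aK * ‖wf‖/2
  have hhalf : lam ^ k * (aK * ‖v‖) ≤ aK * (‖wf‖ / 2) := by
    have h := mul_le_mul_of_nonneg_left hk2.le haK0
    nlinarith [h]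
  have hfin : aK * ‖wf‖ ≤ 2 * (H.C * ρ ^ k * ‖ws‖) := by nlinarith
  -- multiply hlow by ‖wf‖ and compare with hk3
  have t1 := mul_le_mul_of_nonneg_right hlow (le_of_lt hwfpos)
  have t2 := mul_le_mul_of_nonneg_right hfin (norm_nonneg v)
  nlinarith [t1, t2, hk3]

end Aux3


set_option maxHeartbeats 1000000

/-- If `Λ` carries a dominated splitting `E ⊕ F` and `p ∈ Λ` is a
hyperbolic periodic point of period `τ` whose index is at least `dim E`, then `E` is
contained in the stable bundle over `orb(p)`, and the products of the `E`-norms of `Df^m`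
along the orbit of `p` are exponentially small for large `m`. -/
theorem statement9 (d : ℕ) (M : Type*) [MetricSpace M] [CompactSpace M]
    [ChartedSpace (Euc d) M] [IsManifold (𝓡 d) ((⊤ : ℕ∞) : WithTop ℕ∞) M]
    (f : C1Diffeo d M) (Λ : Set M) (hcomp : IsCompact Λ) (hinv : f.toFun '' Λ = Λ)
    (E F : M → Submodule ℝ (Euc d))
    (hds : ∃ m lam, IsDomSplitting d f Λ E F m lam)
    (p : M) (hpΛ : p ∈ Λ) (τ : ℕ) (hτ : τ = Function.minimalPeriod f.toFun p)
    (hτpos : 0 < τ) (hper : f.toFun^[τ] p = p)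
    (H : HypSplitting d f (orbitOf f.toFun p))
    (hind : Module.finrank ℝ (E p) ≤ Module.finrank ℝ (H.Es p)) :
    (∀ x ∈ orbitOf f.toFun p, E x ≤ H.Es x) ∧
    ∃ m₀ : ℕ, ∃ lam₀ ∈ Set.Ioo (0:ℝ) 1, ∀ m : ℕ, m₀ ≤ m →
      ∏ i ∈ Finset.range τ,
          normOn d (Dop d (f.toFun^[m]) (f.toFun^[i] p)) (E (f.toFun^[i] p))
        < lam₀ ^ (m * τ) := by
  obtain ⟨N, lam, D⟩ := hds
  have hSΛ : ∀ x ∈ Λ, f.toFun x ∈ Λ := fun x hx => by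
    rw [← hinv]; exact Set.mem_image_of_mem _ hx
  have hporb : p ∈ orbitOf f.toFun p := ⟨0, rfl⟩
  have hSorb : ∀ x ∈ orbitOf f.toFun p, f.toFun x ∈ orbitOf f.toFun p := by
    rintro x ⟨n, rfl⟩
    exact ⟨n + 1, Function.iterate_succ_apply' f.toFun n p⟩
  have hEp : E p ≤ H.Es p := E_le_Es D hSΛ hpΛ H hind
  have part1 : ∀ x ∈ orbitOf f.toFun p, E x ≤ H.Es x := by
    rintro x ⟨n, rfl⟩
    rw [← map_iter hSΛ D.invariant_E hpΛ n, ← map_iter hSorb H.invariant_Es hporb n]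
    exact Submodule.map_mono hEp
  refine ⟨part1, ?_⟩
  have hC : (0:ℝ) < H.C := H.C_pos
  have hl0 : (0:ℝ) < H.lam := H.lam_mem.1
  have hl1 : H.lam < 1 := H.lam_mem.2
  set lam₀ : ℝ := (1 + H.lam) / 2 with hlam₀def
  have hl₀pos : 0 < lam₀ := by rw [hlam₀def]; linarith
  have hl₀lt1 : lam₀ < 1 := by rw [hlam₀def]; linarith
  have hlt : H.lam < lam₀ := by rw [hlam₀def]; linarith
  have hev : ∀ᶠ m : ℕ in atTop, H.C * (H.lam / lam₀) ^ m < 1 :=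
    eventually_mul_pow_lt (div_nonneg hl0.le hl₀pos.le)
      ((div_lt_one hl₀pos).2 hlt) one_pos
  obtain ⟨m₀, hm₀⟩ := eventually_atTop.1 hev
  refine ⟨m₀, lam₀, ⟨hl₀pos, hl₀lt1⟩, ?_⟩
  intro m hm
  have hkey : H.C * H.lam ^ m < lam₀ ^ m := by
    have h := hm₀ m hm
    have hpos : 0 < lam₀ ^ m := pow_pos hl₀pos m
    rw [div_pow, ← mul_div_assoc, div_lt_one hpos] at h
    exact h
  have hfac : ∀ i ∈ Finset.range τ,
      normOn d (Dop d (f.toFun^[m]) (f.toFun^[i] p)) (E (f.toFun^[i] p))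
        ≤ H.C * H.lam ^ m := by
    intro i _
    exact (normOn_mono _ (part1 _ ⟨i, rfl⟩)).trans (H.contracting _ ⟨i, rfl⟩ m)
  calc ∏ i ∈ Finset.range τ,
        normOn d (Dop d (f.toFun^[m]) (f.toFun^[i] p)) (E (f.toFun^[i] p))
      ≤ ∏ _i ∈ Finset.range τ, (H.C * H.lam ^ m) :=
        Finset.prod_le_prod (fun i _ => normOn_nonneg _ _) hfac
    _ = (H.C * H.lam ^ m) ^ τ := by rw [Finset.prod_const, Finset.card_range]
    _ < (lam₀ ^ m) ^ τ := pow_lt_pow_left₀ hkey (by positivity) hτpos.ne'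
    _ = lam₀ ^ (m * τ) := by rw [← pow_mul]
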